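/- Let C be an [n,k] linear code over F_{q^2} with generator matrix G. Then rank(G G†) = k − dim(Hull_H(C)), where G† is the conjugate transpose (entrywise q-th power followed by transpose) and Hull_H(C) = C ∩ C^{⊥_H}. -/

import Mathlib

theorem stmt6 (q n k : ℕ) (hq : IsPrimePow q)
    (F : Type*) [Field F] [Fintype F] (hF : Fintype.card F = q ^ 2)
    (C : Submodule F (Fin n → F)) (hC : Module.finrank F C = k)
    (G : Matrix (Fin k) (Fin n) F)
    (hGspan : Submodule.span F (Set.range G) = C)
    (hGli : LinearIndependent F G)
    (Cd : Submodule F (Fin n → F))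
    (hdual : ∀ y : Fin n → F, y ∈ Cd ↔ ∀ c ∈ C, ∑ i, c i * (y i) ^ q = 0) :
    (G * (G.transpose.map (fun x => x ^ q))).rank
      = k - Module.finrank F ↥(C ⊓ Cd) := by
  classical
  obtain ⟨p, e, hp, he, hpe⟩ := hq
  have hp' : Nat.Prime p := hp.nat_prime
  -- characteristic of F is p
  have hcard : Fintype.card F = p ^ (2 * e) := by
    rw [hF, ← hpe, ← pow_mul, Nat.mul_comm]
  obtain ⟨n', hcp, hcard'⟩ := FiniteField.card F (ringChar F)
  have hpeq : ringChar F = p := by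
    have hdvd : ringChar F ∣ p ^ (2 * e) := by
      rw [← hcard, hcard']
      exact dvd_pow_self _ n'.pos.ne'
    exact (Nat.prime_dvd_prime_iff_eq hcp hp').mp (hcp.dvd_of_dvd_pow hdvd)
  haveI : CharP F p := hpeq ▸ ringChar.charP F
  haveI : Fact p.Prime := ⟨hp'⟩
  haveI : ExpChar F p := .prime hp'
  have hq0 : q ≠ 0 := by
    rw [← hpe]; exact pow_ne_zero _ hp'.pos.ne'
  -- q-th power is additive and a ring endomorphism; a ^ (q^2) = a
  have hsum : ∀ (m : ℕ) (f : Fin m → F), (∑ i, f i) ^ q = ∑ i, (f i) ^ q := by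
    intro m f
    rw [← hpe]
    exact sum_pow_char_pow p e Finset.univ f
  have hqq : ∀ a : F, (a ^ q) ^ q = a := by
    intro a
    rw [← pow_mul, ← sq, ← hF]
    exact FiniteField.pow_card a
  -- the sesquilinear form
  set B : (Fin n → F) → (Fin n → F) → F := fun c y => ∑ i, c i * (y i) ^ q with hB
  have hconj : ∀ c y, (B c y) ^ q = B y c := by
    intro c y
    rw [hB]
    simp only []
    rw [hsum]
    apply Finset.sum_congr rfl
    intro i _
    rw [mul_pow, hqq, mul_comm]
  have hconj0 : ∀ c y, B c y = 0 ↔ B y c = 0 := by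
    intro c y
    constructor
    · intro h; rw [← hconj, h, zero_pow hq0]
    · intro h; rw [← hconj y c, h, zero_pow hq0]
  -- linear map c ↦ B c y
  have hL : ∀ y : Fin n → F, ∃ L : (Fin n → F) →ₗ[F] F, ∀ c, L c = B c y := by
    intro y
    exact ⟨{ toFun := fun c => B c y,
             map_add' := by
               intro a b
               simp only [hB, Pi.add_apply, add_mul, Finset.sum_add_distrib]
             map_smul' := by
               intro r a
               simp only [hB, Pi.smul_apply, smul_eq_mul, RingHom.id_apply,
                 Finset.mul_sum, mul_assoc] }, fun c => rfl⟩
  set M := G * (G.transpose.map (fun x => x ^ q)) with hM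
  -- kernel characterization
  have hker : ∀ x : Fin k → F, Matrix.vecMul x M = 0 ↔ Matrix.vecMul x G ∈ Cd := by
    intro x
    have hentry : ∀ j, Matrix.vecMul x M j = B (Matrix.vecMul x G) (G j) := by
      intro j
      rw [hM, ← Matrix.vecMul_vecMul]
      simp [Matrix.vecMul, dotProduct, hB, Matrix.transpose_apply, Matrix.map_apply]
    constructor
    · intro h
      rw [hdual]
      intro c hc
      obtain ⟨L, hLdef⟩ := hL (Matrix.vecMul x G)
      have hrange : Set.range G ⊆ (LinearMap.ker L : Set (Fin n → F)) := by
        rintro _ ⟨j, rfl⟩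
        simp only [SetLike.mem_coe, LinearMap.mem_ker, hLdef]
        rw [← hconj0]
        rw [← hentry j, h]
        rfl
      have hCle : C ≤ LinearMap.ker L := by
        rw [← hGspan]
        exact Submodule.span_le.mpr hrange
      have := hCle hc
      rw [LinearMap.mem_ker, hLdef] at this
      exact this
    · intro h
      funext j
      show Matrix.vecMul x M j = (0 : Fin k → F) j
      rw [Pi.zero_apply, hentry j, hconj0]
      rw [hdual] at h
      have := h (G j) (by rw [← hGspan]; exact Submodule.subset_span ⟨j, rfl⟩)
      simpa [hB] using this
  -- relate to mulVecLin of M.transpose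
  have hker' : LinearMap.ker (Matrix.mulVecLin M.transpose)
      = LinearMap.ker (Submodule.mkQ Cd ∘ₗ G.vecMulLinear) := by
    ext x
    simp only [LinearMap.mem_ker, LinearMap.comp_apply, Matrix.mulVecLin_apply,
      Matrix.mulVec_transpose, Matrix.vecMulLinear_apply, Submodule.mkQ_apply,
      Submodule.Quotient.mk_eq_zero]
    exact hker x
  -- linear equivalence between kernel and C ⊓ Cd
  have hinj : Function.Injective G.vecMulLinear := by
    rw [Matrix.coe_vecMulLinear, Matrix.vecMul_injective_iff]
    exact hGli
  have hrange : LinearMap.range G.vecMulLinear = C := by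
    rw [range_vecMulLinear]; exact hGspan
  have hdim : Module.finrank F (LinearMap.ker (Matrix.mulVecLin M.transpose))
      = Module.finrank F ↥(C ⊓ Cd) := by
    rw [hker']
    have hmap : ∀ x : Fin k → F,
        x ∈ LinearMap.ker (Submodule.mkQ Cd ∘ₗ G.vecMulLinear) ↔
          G.vecMulLinear x ∈ C ⊓ Cd := by
      intro x
      simp only [LinearMap.mem_ker, LinearMap.comp_apply, Submodule.mkQ_apply,
        Submodule.Quotient.mk_eq_zero, Submodule.mem_inf]
      constructor
      · intro h
        refine ⟨?_, h⟩
        rw [← hrange]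
        exact LinearMap.mem_range_self _ x
      · exact fun h => h.2
    refine LinearEquiv.finrank_eq ?_
    refine LinearEquiv.ofBijective
      (LinearMap.codRestrict (C ⊓ Cd)
        ((G.vecMulLinear).comp (LinearMap.ker (Submodule.mkQ Cd ∘ₗ G.vecMulLinear)).subtype)
        (fun x => (hmap x).mp x.2)) ⟨?_, ?_⟩
    · intro a b hab
      apply Subtype.ext
      apply hinj
      simpa [LinearMap.codRestrict, Subtype.ext_iff] using hab
    · rintro ⟨v, hv⟩
      have hvC : v ∈ C := (Submodule.mem_inf.mp hv).1
      rw [← hrange] at hvC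
      obtain ⟨x, hx⟩ := hvC
      have hxk : x ∈ LinearMap.ker (Submodule.mkQ Cd ∘ₗ G.vecMulLinear) := by
        rw [hmap, hx]; exact hv
      exact ⟨⟨x, hxk⟩, by apply Subtype.ext; simpa [LinearMap.codRestrict] using hx⟩
  -- rank-nullity
  have hrn := LinearMap.finrank_range_add_finrank_ker (Matrix.mulVecLin M.transpose)
  rw [Module.finrank_fintype_fun_eq_card, Fintype.card_fin] at hrn
  have hrank : M.rank = Module.finrank F (LinearMap.range (Matrix.mulVecLin M.transpose)) := by
    rw [← Matrix.rank_transpose M]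
    rfl
  rw [hrank]
  omega
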